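/- Let p and q be positive integers with p ≤ q, set γ = p/q, and let x and y be nonzero real numbers. Then, as n → ∞ over the positive integers, (1/(2qn))² · Σ_{s=-pn}^{pn} Σ_{t=-pn}^{pn} exp(-2πi(x·s + y·t)/(2qn)) converges to sin(πγx)·sin(πγy)/(π²·x·y). That is, as the image size tends to infinity with the relative bandwidth γ of the square low-pass filter held fixed, the normalized low-pass convolution kernel converges pointwise to a two-dimensional sinc function (a product of one-dimensional scaled sinc functions). -/

import Mathlib

set_option maxHeartbeats 1000000
open Filter Finset Complex

lemma geom_Icc (z : ℂ) (hz : z ≠ 0) (hz1 : z ≠ 1) (m : ℕ) :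
    ∑ s ∈ Finset.Icc (-(m:ℤ)) (m:ℤ), z ^ s
      = z ^ (-(m:ℤ)) * ((z ^ (2*m+1) - 1) / (z - 1)) := by
  have h1 : ∑ s ∈ Finset.Icc (-(m:ℤ)) (m:ℤ), z ^ s
      = ∑ i ∈ Finset.range (2*m+1), z ^ ((i:ℤ) - m) := by
    refine Finset.sum_nbij' (fun s => (s + m).toNat) (fun i => (i:ℤ) - m) ?_ ?_ ?_ ?_ ?_ <;>
      intro a ha <;>
      simp only [Finset.mem_Icc, Finset.mem_range] at ha ⊢ <;>
      first
        | omega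
        | (congr 1; omega)
  rw [h1, ← geom_sum_eq hz1, Finset.mul_sum]
  refine Finset.sum_congr rfl fun i hi => ?_
  rw [zpow_sub₀ hz, zpow_natCast, zpow_natCast]
  field_simp [zpow_ne_zero]
  rw [zpow_neg, zpow_natCast, mul_inv_cancel₀ (pow_ne_zero _ hz)]

lemma dim1 (p q : ℕ) (hp : 0 < p) (hq : 0 < q) (x : ℝ) (hx : x ≠ 0) :
    Filter.Tendsto
      (fun n : ℕ => (1 / (2 * (q : ℂ) * (n : ℂ))) *
        ∑ s ∈ Finset.Icc (-((p * n : ℕ) : ℤ)) ((p * n : ℕ) : ℤ),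
          Complex.exp (-(2 * (Real.pi : ℂ) * Complex.I) * ((x : ℂ) * (s : ℂ))
            / (2 * (q : ℂ) * (n : ℂ))))
      Filter.atTop
      (nhds ((Real.sin (Real.pi * ((p : ℝ) / (q : ℝ)) * x) / (Real.pi * x) : ℝ) : ℂ)) := by
  have hq0 : (q : ℂ) ≠ 0 := Nat.cast_ne_zero.mpr hq.ne'
  have hqR : (q : ℝ) ≠ 0 := Nat.cast_ne_zero.mpr hq.ne'
  have hpi : (Real.pi : ℝ) ≠ 0 := Real.pi_ne_zero
  have hpiC : (Real.pi : ℂ) ≠ 0 := Complex.ofReal_ne_zero.mpr hpi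
  have hxC : (x : ℂ) ≠ 0 := Complex.ofReal_ne_zero.mpr hx
  obtain ⟨d, hd_def⟩ : ∃ c : ℂ, c = -((Real.pi : ℂ) * (x : ℂ)) * Complex.I / (q : ℂ) := ⟨_, rfl⟩
  have hd : d ≠ 0 := by
    rw [hd_def]
    simp only [div_ne_zero_iff, neg_ne_zero, mul_ne_zero_iff]
    exact ⟨⟨⟨hpiC, hxC⟩, Complex.I_ne_zero⟩, hq0⟩
  -- limit of exp(d/n)
  have hinv : Filter.Tendsto (fun n : ℕ => d / (n : ℂ)) Filter.atTop (nhds 0) := by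
    have h1 : Filter.Tendsto (fun n : ℕ => ((n : ℝ)⁻¹ : ℝ)) Filter.atTop (nhds 0) :=
      tendsto_inv_atTop_nhds_zero_nat
    have h2 : Filter.Tendsto (fun n : ℕ => (((n : ℝ)⁻¹ : ℝ) : ℂ)) Filter.atTop (nhds 0) := by
      have h := (Complex.continuous_ofReal.tendsto 0).comp h1
      exact h
    have h3 := h2.const_mul d
    simp only [mul_zero] at h3
    refine h3.congr fun n => ?_
    push_cast
    rw [div_eq_mul_inv]
  have hE : Filter.Tendsto (fun n : ℕ => Complex.exp (d / n)) Filter.atTop (nhds 1) := by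
    have h := (Complex.continuous_exp.tendsto 0).comp hinv
    simpa [Function.comp_def] using h
  -- slope limit
  have hslope : Filter.Tendsto (fun n : ℕ => (Complex.exp (d / n) - 1) / (d / n))
      Filter.atTop (nhds 1) := by
    have h0 : Filter.Tendsto (slope Complex.exp 0) (nhdsWithin 0 {(0:ℂ)}ᶜ) (nhds 1) := by
      have h := (Complex.hasDerivAt_exp 0)
      rw [hasDerivAt_iff_tendsto_slope] at h
      simpa using h
    have hmem : Filter.Tendsto (fun n : ℕ => d / (n : ℂ)) Filter.atTop
        (nhdsWithin 0 {(0:ℂ)}ᶜ) := by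
      rw [tendsto_nhdsWithin_iff]
      refine ⟨hinv, ?_⟩
      filter_upwards [Filter.eventually_ge_atTop 1] with n hn
      have hn0 : (n : ℂ) ≠ 0 := Nat.cast_ne_zero.mpr (by omega)
      simp [div_ne_zero hd hn0]
    have h := h0.comp hmem
    refine h.congr fun n => ?_
    simp [slope_def_field, div_eq_mul_inv]
  -- denominator limit
  have hden : Filter.Tendsto (fun n : ℕ => (Complex.exp (d / n) - 1) * (2 * (q:ℂ) * n))
      Filter.atTop (nhds (2 * (q:ℂ) * d)) := by
    have h1 := hslope.mul_const (2 * (q:ℂ) * d)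
    rw [one_mul] at h1
    refine Filter.Tendsto.congr' ?_ h1
    filter_upwards [Filter.eventually_ge_atTop 1] with n hn
    have hn0 : (n : ℂ) ≠ 0 := Nat.cast_ne_zero.mpr (by omega)
    field_simp
  -- numerator limit
  have hnum : Filter.Tendsto
      (fun n : ℕ => Complex.exp (-(p:ℂ) * d) * (Complex.exp (2 * (p:ℂ) * d) * Complex.exp (d / n) - 1))
      Filter.atTop
      (nhds (Complex.exp (-(p:ℂ) * d) * (Complex.exp (2 * (p:ℂ) * d) - 1))) := by
    have h1 := ((hE.const_mul (Complex.exp (2 * (p:ℂ) * d))).sub_const 1).const_mul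
      (Complex.exp (-(p:ℂ) * d))
    simpa using h1
  have hlim : Filter.Tendsto
      (fun n : ℕ => Complex.exp (-(p:ℂ) * d) * (Complex.exp (2 * (p:ℂ) * d) * Complex.exp (d / n) - 1)
        / ((Complex.exp (d / n) - 1) * (2 * (q:ℂ) * n)))
      Filter.atTop
      (nhds (Complex.exp (-(p:ℂ) * d) * (Complex.exp (2 * (p:ℂ) * d) - 1) / (2 * (q:ℂ) * d))) :=
    hnum.div hden (by
      simp only [mul_ne_zero_iff]
      exact ⟨⟨two_ne_zero, hq0⟩, hd⟩)
  -- identify the limit value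
  have hval : Complex.exp (-(p:ℂ) * d) * (Complex.exp (2 * (p:ℂ) * d) - 1) / (2 * (q:ℂ) * d)
      = ((Real.sin (Real.pi * ((p : ℝ) / (q : ℝ)) * x) / (Real.pi * x) : ℝ) : ℂ) := by
    obtain ⟨a, ha_def⟩ : ∃ a : ℝ, a = Real.pi * ((p : ℝ) / (q : ℝ)) * x := ⟨_, rfl⟩
    rw [← ha_def]
    have hpd : (p:ℂ) * d = -(a:ℂ) * Complex.I := by
      rw [hd_def, ha_def]
      push_cast
      field_simp
    have hqd : 2 * (q:ℂ) * d = -(2 * (Real.pi:ℂ) * (x:ℂ)) * Complex.I := by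
      rw [hd_def]
      field_simp
    have h2pd : 2 * (p:ℂ) * d = (-(a:ℂ) * Complex.I) + (-(a:ℂ) * Complex.I) := by
      rw [show 2 * (p:ℂ) * d = (p:ℂ) * d + (p:ℂ) * d by ring, hpd]
    have hnpd : -(p:ℂ) * d = (a:ℂ) * Complex.I := by rw [neg_mul, hpd]; ring
    rw [hnpd, h2pd, hqd, Complex.exp_add]
    rw [Complex.ofReal_div, Complex.ofReal_sin, Complex.sin]
    have hE12 : Complex.exp (-(a:ℂ) * Complex.I) * Complex.exp ((a:ℂ) * Complex.I) = 1 := by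
      rw [← Complex.exp_add, show -(a:ℂ) * Complex.I + (a:ℂ) * Complex.I = 0 by ring,
        Complex.exp_zero]
    have hden0 : -(2 * (Real.pi:ℂ) * (x:ℂ)) * Complex.I ≠ 0 := by
      simp only [neg_ne_zero, mul_ne_zero_iff]
      exact ⟨⟨⟨two_ne_zero, hpiC⟩, hxC⟩, Complex.I_ne_zero⟩
    have hpx : (Real.pi:ℂ) * (x:ℂ) ≠ 0 := mul_ne_zero hpiC hxC
    have key : Complex.exp ((a:ℂ) * Complex.I) *
        (Complex.exp (-(a:ℂ) * Complex.I) * Complex.exp (-(a:ℂ) * Complex.I) - 1)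
        = Complex.exp (-(a:ℂ) * Complex.I) - Complex.exp ((a:ℂ) * Complex.I) := by
      linear_combination Complex.exp (-(a:ℂ) * Complex.I) * hE12
    rw [key]
    push_cast
    rw [div_eq_div_iff hden0 hpx]
    linear_combination ((Complex.exp (-(a:ℂ) * Complex.I) - Complex.exp ((a:ℂ) * Complex.I))
      * (Real.pi : ℂ) * (x : ℂ)) * Complex.I_sq
  rw [← hval]
  -- eventual equality of the sequence with the closed form
  refine Filter.Tendsto.congr' ?_ hlim
  filter_upwards [Filter.eventually_gt_atTop (Nat.floor |x|)] with n hn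
  have hn1 : 1 ≤ n := by omega
  have hnx : |x| < (n : ℝ) := by
    calc |x| < (Nat.floor |x| : ℝ) + 1 := Nat.lt_floor_add_one _
    _ ≤ (n : ℝ) := by exact_mod_cast hn
  have hn0 : (n : ℂ) ≠ 0 := Nat.cast_ne_zero.mpr (by omega)
  have hnR : (n : ℝ) ≠ 0 := Nat.cast_ne_zero.mpr (by omega)
  have hz1 : Complex.exp (d / n) ≠ 1 := by
    rw [Ne, Complex.exp_eq_one_iff]
    rintro ⟨k, hk⟩
    have hdn : d / (n:ℂ) = ((-(Real.pi * x) / ((q:ℝ) * n) : ℝ) : ℂ) * Complex.I := by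
      rw [hd_def]
      push_cast
      field_simp
    rw [hdn] at hk
    have him := congrArg Complex.im hk
    simp only [Complex.mul_im, Complex.mul_re, Complex.ofReal_re, Complex.ofReal_im,
      Complex.I_re, Complex.I_im, Complex.intCast_re, Complex.intCast_im] at him
    norm_num at him
    -- him : -(Real.pi * x * (q)⁻¹ * (n)⁻¹) = Real.pi * k * 2  (approximately)
    have hx_eq : x = -(k : ℝ) * (2 * (q:ℝ) * n) := by
      have hqn : (q:ℝ) * n ≠ 0 := mul_ne_zero hqR hnR
      field_simp at him
      nlinarith [him, Real.pi_pos]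
    rcases eq_or_ne k 0 with hk0 | hk0
    · rw [hk0] at hx_eq; simp at hx_eq; exact hx hx_eq
    · have h1k : (1:ℝ) ≤ |(k:ℝ)| := by
        rw [← Int.cast_abs]
        exact_mod_cast Int.one_le_abs hk0
      have habs : |x| = |(k:ℝ)| * (2 * (q:ℝ) * n) := by
        rw [hx_eq, abs_mul, abs_neg]
        congr 1
        rw [abs_of_pos]
        have h1q : (0:ℝ) < (q:ℝ) := by exact_mod_cast hq
        have h1n : (0:ℝ) < (n:ℝ) := by exact_mod_cast (by omega : 0 < n)
        positivity
      have hqn : (n:ℝ) ≤ 2 * (q:ℝ) * n := by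
        have h1q : (1:ℝ) ≤ (q:ℝ) := by exact_mod_cast hq
        have h1n : (0:ℝ) ≤ (n:ℝ) := by positivity
        nlinarith
      nlinarith
  have hz0 : Complex.exp (d / n) ≠ 0 := Complex.exp_ne_zero _
  -- rewrite the sum
  have hterm : ∀ s : ℤ, Complex.exp (-(2 * (Real.pi : ℂ) * Complex.I) * ((x : ℂ) * (s : ℂ))
      / (2 * (q : ℂ) * (n : ℂ))) = Complex.exp (d / n) ^ s := by
    intro s
    rw [← Complex.exp_int_mul]
    congr 1
    rw [hd_def]
    field_simp
  rw [Finset.sum_congr rfl (fun s _ => hterm s), geom_Icc _ hz0 hz1 (p*n)]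
  have hzm : Complex.exp (d / n) ^ (-((p*n:ℕ):ℤ)) = Complex.exp (-(p:ℂ) * d) := by
    rw [← Complex.exp_int_mul]
    congr 1
    push_cast
    field_simp
  have hzm2 : Complex.exp (d / n) ^ (2*(p*n)+1)
      = Complex.exp (2 * (p:ℂ) * d) * Complex.exp (d / n) := by
    rw [← Complex.exp_nat_mul, ← Complex.exp_add]
    congr 1
    push_cast
    field_simp
  rw [hzm, hzm2]
  have hzne1 : Complex.exp (d / n) - 1 ≠ 0 := sub_ne_zero.mpr hz1
  have hX : (2 * (q:ℂ) * (n:ℂ)) ≠ 0 := by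
    exact mul_ne_zero (mul_ne_zero two_ne_zero hq0) hn0
  have key : ∀ (A B C X : ℂ), C ≠ 0 → X ≠ 0 →
      1 / X * (A * (B / C)) = A * B / (C * X) := by
    intro A B C X hC hX
    field_simp
  exact (key _ _ _ _ hzne1 hX).symm


/-- Two-dimensional infinite-grid limit of the square low-pass filtering kernel: for positive
integers `p ≤ q` with `γ = p/q` and nonzero reals `x, y`, as `n → ∞`,
`(1/(2qn))² ∑_{s=-pn}^{pn} ∑_{t=-pn}^{pn} exp(-2πi(x·s + y·t)/(2qn))
  → sin(πγx)·sin(πγy)/(π²·x·y)`,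
i.e. the normalized low-pass convolution kernel converges pointwise to a 2D sinc function. -/
theorem stmt_13 (p q : ℕ) (hp : 0 < p) (hq : 0 < q) (hpq : p ≤ q)
    (x y : ℝ) (hx : x ≠ 0) (hy : y ≠ 0) :
    Filter.Tendsto
      (fun n : ℕ =>
        (1 / (2 * (q : ℂ) * (n : ℂ))) ^ 2 *
          ∑ s ∈ Finset.Icc (-((p * n : ℕ) : ℤ)) ((p * n : ℕ) : ℤ),
            ∑ t ∈ Finset.Icc (-((p * n : ℕ) : ℤ)) ((p * n : ℕ) : ℤ),
              Complex.exp (-(2 * (Real.pi : ℂ) * Complex.I) *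
                ((x : ℂ) * (s : ℂ) + (y : ℂ) * (t : ℂ)) / (2 * (q : ℂ) * (n : ℂ))))
      Filter.atTop
      (nhds ((Real.sin (Real.pi * ((p : ℝ) / (q : ℝ)) * x) *
              Real.sin (Real.pi * ((p : ℝ) / (q : ℝ)) * y) /
              (Real.pi ^ 2 * x * y) : ℝ) : ℂ)) := by
  have h1 := dim1 p q hp hq x hx
  have h2 := dim1 p q hp hq y hy
  have hmul := h1.mul h2
  have hval : ((Real.sin (Real.pi * ((p : ℝ) / (q : ℝ)) * x) / (Real.pi * x) : ℝ) : ℂ) *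
      ((Real.sin (Real.pi * ((p : ℝ) / (q : ℝ)) * y) / (Real.pi * y) : ℝ) : ℂ)
      = ((Real.sin (Real.pi * ((p : ℝ) / (q : ℝ)) * x) *
          Real.sin (Real.pi * ((p : ℝ) / (q : ℝ)) * y) /
          (Real.pi ^ 2 * x * y) : ℝ) : ℂ) := by
    rw [← Complex.ofReal_mul]
    congr 1
    rw [div_mul_div_comm]
    congr 1
    ring
  rw [hval] at hmul
  refine hmul.congr fun n => ?_
  have hsplit : ∀ s t : ℤ,
      Complex.exp (-(2 * (Real.pi : ℂ) * Complex.I) *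
        ((x : ℂ) * (s : ℂ) + (y : ℂ) * (t : ℂ)) / (2 * (q : ℂ) * (n : ℂ)))
      = Complex.exp (-(2 * (Real.pi : ℂ) * Complex.I) * ((x : ℂ) * (s : ℂ))
          / (2 * (q : ℂ) * (n : ℂ))) *
        Complex.exp (-(2 * (Real.pi : ℂ) * Complex.I) * ((y : ℂ) * (t : ℂ))
          / (2 * (q : ℂ) * (n : ℂ))) := by
    intro s t
    rw [← Complex.exp_add, ← add_div]
    congr 1
    ring
  simp only [hsplit]
  rw [← Finset.sum_mul_sum]
  ring
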